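/- Let E be a finite-dimensional real normed space, A : E → ℝ convex superlinear, B its Fenchel transform. Let x₀ ∈ E and let (F_i)_{i∈I} be a family of flats of A each containing x₀ in its relative interior. Then there exists a flat F of A containing every F_i and containing x₀ in its relative interior. -/

import Mathlib

open Set

section Helpers
variable {E : Type*} [NormedAddCommGroup E] [NormedSpace ℝ E]

lemma mem_intrinsicInterior_iff_ball {s : Set E} {x : E} :
    x ∈ intrinsicInterior ℝ s ↔
      x ∈ affineSpan ℝ s ∧ ∃ ε > 0, ∀ y ∈ affineSpan ℝ s, dist y x < ε → y ∈ s := by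
  rw [mem_intrinsicInterior]
  constructor
  · rintro ⟨y, hy, rfl⟩
    refine ⟨y.2, ?_⟩
    rw [mem_interior_iff_mem_nhds, Metric.mem_nhds_iff] at hy
    obtain ⟨ε, hε, hball⟩ := hy
    refine ⟨ε, hε, fun z hz hdz => ?_⟩
    have : (⟨z, hz⟩ : affineSpan ℝ s) ∈ Metric.ball y ε := by
      rw [Metric.mem_ball, Subtype.dist_eq]; exact hdz
    exact hball this
  · rintro ⟨hx, ε, hε, h⟩
    refine ⟨⟨x, hx⟩, ?_, rfl⟩
    rw [mem_interior_iff_mem_nhds, Metric.mem_nhds_iff]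
    refine ⟨ε, hε, fun z hz => ?_⟩
    rw [Metric.mem_ball, Subtype.dist_eq] at hz
    exact h z z.2 hz

lemma exists_delta_line {s : Set E} {x₀ x : E} (h : x₀ ∈ intrinsicInterior ℝ s) (hx : x ∈ s) :
    ∃ δ > 0, ∀ t : ℝ, |t| < δ → x₀ + t • (x - x₀) ∈ s := by
  obtain ⟨hx₀span, ε, hε, hball⟩ := mem_intrinsicInterior_iff_ball.mp h
  rcases eq_or_ne x x₀ with rfl | hne
  · exact ⟨1, one_pos, fun t _ => by simpa using intrinsicInterior_subset h⟩
  have hnorm : (0:ℝ) < ‖x - x₀‖ := by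
    rw [norm_sub_pos_iff]; exact hne
  refine ⟨ε / ‖x - x₀‖, by positivity, fun t ht => ?_⟩
  have hmem : x₀ + t • (x - x₀) ∈ affineSpan ℝ s := by
    have := AffineMap.lineMap_mem (Q := affineSpan ℝ s) t hx₀span (subset_affineSpan ℝ s hx)
    rwa [AffineMap.lineMap_apply_module', add_comm] at this
  refine hball _ hmem ?_
  rw [dist_eq_norm]
  simp only [add_sub_cancel_left, norm_smul, Real.norm_eq_abs]
  calc |t| * ‖x - x₀‖ < (ε / ‖x - x₀‖) * ‖x - x₀‖ := by
        exact mul_lt_mul_of_pos_right ht hnorm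
    _ = ε := by field_simp

end Helpers

lemma exists_subgradient' {E : Type*} [NormedAddCommGroup E] [NormedSpace ℝ E]
    [FiniteDimensional ℝ E]
    (A : E → ℝ) (hconv : ConvexOn ℝ Set.univ A) (x₀ : E) :
    ∃ ξ : E →L[ℝ] ℝ, ∀ x, A x₀ + ξ (x - x₀) ≤ A x := by
  have hcont : Continuous A := by
    have := hconv.continuousOn isOpen_univ
    rwa [continuousOn_univ] at this
  set S : Set (E × ℝ) := {p | A p.1 < p.2} with hS
  have hSopen : IsOpen S := isOpen_lt (hcont.comp continuous_fst) continuous_snd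
  have hSconv : Convex ℝ S := by
    have := hconv.convex_strict_epigraph
    simpa [Set.mem_univ] using this
  have hdisj : Disjoint S {((x₀, A x₀) : E × ℝ)} := by
    rw [Set.disjoint_singleton_right]
    simp [hS]
  obtain ⟨f, u, h1, h2⟩ := geometric_hahn_banach_open hSconv hSopen (convex_singleton _) hdisj
  have h2' : u ≤ f (x₀, A x₀) := h2 _ rfl
  set c : ℝ := f (0, 1) with hc
  have key : ∀ (x : E) (y : ℝ), f (x, y) = f (x, 0) + y * c := by
    intro x y
    have : (x, y) = (x, (0:ℝ)) + y • ((0:E), (1:ℝ)) := by simp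
    rw [this, map_add, map_smul]
    simp [hc, smul_eq_mul]
  have h1' : ∀ (x : E) (ε : ℝ), 0 < ε → f (x, 0) + (A x + ε) * c < u := by
    intro x ε hε
    have : (x, A x + ε) ∈ S := by simp [hS]; linarith
    have := h1 _ this
    rwa [key] at this
  have hcne : c ≠ 0 := by
    intro h0
    have := h1' x₀ 1 one_pos
    have h2'' := h2'
    rw [key] at h2''
    rw [h0] at this h2''
    linarith
  have hcle : c ≤ 0 := by
    by_contra hpos
    push_neg at hpos
    have hA := h1' x₀ 1 one_pos
    set ε : ℝ := (u - f (x₀, 0) - A x₀ * c) / c + 1 with hεd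
    have hεpos : 0 < ε := by
      rw [hεd]
      have : 0 < u - f (x₀, 0) - A x₀ * c := by nlinarith
      have := div_pos this hpos
      linarith
    have := h1' x₀ ε hεpos
    have hεc : ε * c = u - f (x₀, 0) - A x₀ * c + c := by
      rw [hεd]; field_simp
    nlinarith
  have hcneg : c < 0 := lt_of_le_of_ne hcle hcne
  have hle : ∀ x : E, f (x, 0) + A x * c ≤ u := by
    intro x
    by_contra hgt
    push_neg at hgt
    set ε : ℝ := (f (x, 0) + A x * c - u) / (-c) with hεd
    have hεpos : 0 < ε := div_pos (by linarith) (by linarith)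
    have := h1' x ε hεpos
    have hεc : ε * c = -(f (x, 0) + A x * c - u) := by
      rw [hεd, div_mul_eq_mul_div, mul_div_assoc, div_neg, div_self hcne]
      ring
    nlinarith
  refine ⟨(-c⁻¹) • f.comp (ContinuousLinearMap.inl ℝ E ℝ), fun x => ?_⟩
  have hx := hle x
  have hx₀ : u ≤ f (x₀, 0) + A x₀ * c := by rw [key] at h2'; exact h2'
  have hinl : ∀ z : E, (ContinuousLinearMap.inl ℝ E ℝ) z = (z, (0:ℝ)) := fun z => rfl
  have hfsub : f (x - x₀, 0) = f (x, 0) - f (x₀, 0) := by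
    have : ((x - x₀, (0:ℝ)) : E × ℝ) = (x, (0:ℝ)) - (x₀, (0:ℝ)) := by simp
    rw [this, map_sub]
  simp only [ContinuousLinearMap.smul_apply, ContinuousLinearMap.comp_apply, hinl, hfsub,
    smul_eq_mul]
  have hd : f (x, 0) - f (x₀, 0) ≤ A x₀ * c - A x * c := by linarith
  have hcinvneg : (0:ℝ) ≤ -c⁻¹ := by
    have : c⁻¹ < 0 := inv_lt_zero.mpr hcneg
    linarith
  have hmul := mul_le_mul_of_nonneg_left hd hcinvneg
  have hrhs : -c⁻¹ * (A x₀ * c - A x * c) = A x - A x₀ := by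
    field_simp
    ring
  linarith

/-- A flat of `A`. -/
def IsFlat {E : Type*} [NormedAddCommGroup E] [NormedSpace ℝ E]
    (A : E → ℝ) (F : Set E) : Prop :=
  ∃ V : AffineSubspace ℝ (E × ℝ),
    (∃ p ∈ V, p.2 = A p.1) ∧
    (∀ p ∈ (V : Set (E × ℝ)), ¬ A p.1 < p.2) ∧
    F = {x : E | (x, A x) ∈ V}

set_option synthInstance.maxHeartbeats 1000000 in
set_option maxHeartbeats 2000000 in
/-- A family of flats each containing `x₀` in its relative interior is contained in a
single flat containing `x₀` in its relative interior. -/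
theorem stmt_7 {E : Type*} [NormedAddCommGroup E] [NormedSpace ℝ E] [FiniteDimensional ℝ E]
    (A : E → ℝ) (hconv : ConvexOn ℝ Set.univ A)
    (hsup : ∀ C > (0:ℝ), ∃ R : ℝ, ∀ x : E, R ≤ ‖x‖ → C * ‖x‖ ≤ A x)
    {I : Type*} (F : I → Set E) (hflat : ∀ i, IsFlat A (F i))
    (x₀ : E) (hri : ∀ i, x₀ ∈ intrinsicInterior ℝ (F i)) :
    ∃ G : Set E, IsFlat A G ∧ (∀ i, F i ⊆ G) ∧ x₀ ∈ intrinsicInterior ℝ G := by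
  classical
  obtain ⟨ξ, hξ⟩ := exists_subgradient' A hconv x₀
  set ℓ : E → ℝ := fun x => A x₀ + ξ (x - x₀) with hℓ
  have hℓx₀ : ℓ x₀ = A x₀ := by simp [hℓ]
  have hℓle : ∀ x, ℓ x ≤ A x := fun x => hξ x
  have hx₀F : ∀ i, x₀ ∈ F i := fun i => intrinsicInterior_subset (hri i)
  -- Step 1 : A = ℓ on each F i
  have hstep1 : ∀ i, ∀ x ∈ F i, A x = ℓ x := by
    intro i x hx
    obtain ⟨V, -, hbelow, hFeq⟩ := hflat i
    have hxV : (x, A x) ∈ V := by rw [hFeq] at hx; exact hx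
    have hx₀V : (x₀, A x₀) ∈ V := by have := hx₀F i; rw [hFeq] at this; exact this
    obtain ⟨δ, hδ, hline⟩ := exists_delta_line (hri i) hx
    set s : ℝ := δ / 2 with hs
    have hspos : 0 < s := by positivity
    set y : E := x₀ + (-s) • (x - x₀) with hy
    have hyF : y ∈ F i := hline (-s) (by rw [abs_neg, abs_of_pos hspos]; linarith)
    have hyV : (y, A y) ∈ V := by rw [hFeq] at hyF; exact hyF
    set t : ℝ := s / (1 + s) with ht
    have h1s : (0:ℝ) < 1 + s := by linarith
    have h1s' : (1:ℝ) + s ≠ 0 := ne_of_gt h1s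
    have ht0 : 0 < t := by rw [ht]; positivity
    have ht1 : t < 1 := by rw [ht, div_lt_one h1s]; linarith
    have hcomb : t • x + (1 - t) • y = x₀ := by
      rw [hy, ht]
      match_scalars
      · field_simp; ring
      · field_simp; ring
    have hq : t • ((x, A x) : E × ℝ) + (1 - t) • ((y, A y) : E × ℝ) ∈ V := by
      have := AffineMap.lineMap_mem (1 - t) hxV hyV
      rwa [AffineMap.lineMap_apply_module, sub_sub_cancel] at this
    have hb := hbelow _ hq
    have hq1 : (t • ((x, A x) : E × ℝ) + (1 - t) • ((y, A y) : E × ℝ)).1 = x₀ := by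
      simpa using hcomb
    have hq2 : (t • ((x, A x) : E × ℝ) + (1 - t) • ((y, A y) : E × ℝ)).2
        = t * A x + (1 - t) * A y := rfl
    rw [hq1, hq2] at hb
    push_neg at hb
    have hlin : t * ξ x + (1 - t) * ξ y = ξ x₀ := by
      have := congrArg ξ hcomb
      rw [map_add, map_smul, map_smul] at this
      simpa [smul_eq_mul] using this
    have hℓcomb : t * ℓ x + (1 - t) * ℓ y = A x₀ := by
      simp only [hℓ, map_sub]
      linear_combination hlin
    have hax : ℓ x ≤ A x := hℓle x
    have hay : ℓ y ≤ A y := hℓle y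
    have h4 : (1 - t) * ℓ y ≤ (1 - t) * A y :=
      mul_le_mul_of_nonneg_left hay (by linarith)
    have h5 : t * A x ≤ t * ℓ x := by linarith
    have h6 : A x ≤ ℓ x := (mul_le_mul_iff_right₀ ht0).mp h5
    exact le_antisymm h6 hax
  -- The ambient affine span
  set M : AffineSubspace ℝ E := affineSpan ℝ (insert x₀ (⋃ i, F i)) with hM
  have hx₀M : x₀ ∈ M := subset_affineSpan ℝ _ (mem_insert _ _)
  have hFM : ∀ i, F i ⊆ (M : Set E) := fun i x hx =>
    subset_affineSpan ℝ _ (mem_insert_of_mem _ (mem_iUnion.mpr ⟨i, hx⟩))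
  set G : Set E := {x | x ∈ M ∧ A x = ℓ x} with hG
  have hx₀G : x₀ ∈ G := ⟨hx₀M, hℓx₀.symm⟩
  have hFG : ∀ i, F i ⊆ G := fun i x hx => ⟨hFM i hx, hstep1 i x hx⟩
  -- The affine map x ↦ (x, ℓ x) and the supporting subspace V
  set ψ : E →ᵃ[ℝ] E × ℝ :=
    { toFun := fun x => (x, ℓ x)
      linear := LinearMap.prod LinearMap.id (ξ : E →ₗ[ℝ] ℝ)
      map_vadd' := by
        intro p v
        ext
        · rfl
        · show ℓ (v + p) = ξ v + ℓ p
          simp only [hℓ]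
          rw [show v + p - x₀ = v + (p - x₀) by abel, map_add]
          ring } with hψ
  set V : AffineSubspace ℝ (E × ℝ) := M.map ψ with hV
  have hVmem : ∀ p : E × ℝ, p ∈ V ↔ p.1 ∈ M ∧ ℓ p.1 = p.2 := by
    intro p
    rw [hV, AffineSubspace.mem_map]
    constructor
    · rintro ⟨x, hx, rfl⟩
      exact ⟨hx, rfl⟩
    · rintro ⟨h1, h2⟩
      exact ⟨p.1, h1, Prod.ext rfl h2⟩
  have hGeq : G = {x : E | (x, A x) ∈ V} := by
    ext x
    simp only [hG, mem_setOf_eq]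
    rw [hVmem (x, A x)]
    exact ⟨fun h => ⟨h.1, h.2.symm⟩, fun h => ⟨h.1, h.2.symm⟩⟩
  -- convexity of G
  have hGconv : Convex ℝ G := by
    intro a ha b hb p q hp hq hpq
    constructor
    · have := AffineMap.lineMap_mem q ha.1 hb.1
      rw [AffineMap.lineMap_apply_module] at this
      rwa [show p = 1 - q by linarith]
    · have h1 : A (p • a + q • b) ≤ p * A a + q * A b :=
        hconv.2 (mem_univ a) (mem_univ b) hp hq hpq
      rw [ha.2, hb.2] at h1
      have h2 : ℓ (p • a + q • b) = p * ℓ a + q * ℓ b := by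
        simp only [hℓ]
        rw [map_sub, map_add, map_smul, map_smul]
        simp only [smul_eq_mul, map_sub]
        linear_combination (A x₀ - ξ x₀) * hpq.symm
      have h3 : ℓ (p • a + q • b) ≤ A (p • a + q • b) := hℓle _
      linarith
  -- the key local statement
  have key : ∃ ε > 0, ∀ z, z ∈ M → ‖z - x₀‖ < ε → z ∈ G := by
    have hdir : M.direction = Submodule.span ℝ ((· -ᵥ x₀) '' (insert x₀ (⋃ i, F i))) := by
      rw [hM, direction_affineSpan, vectorSpan_eq_span_vsub_set_right ℝ (mem_insert x₀ _)]
    set S : Set E := (· -ᵥ x₀) '' (insert x₀ (⋃ i, F i)) with hSdef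
    obtain ⟨B, hBS, hBspan, hBli⟩ := exists_linearIndependent ℝ S
    have hBfin : B.Finite := hBli.setFinite
    haveI : Fintype B := hBfin.fintype
    have hdel : ∀ b : B, ∃ δ > 0, ∀ t : ℝ, |t| < δ → x₀ + t • (b : E) ∈ G := by
      rintro ⟨b, hb⟩
      obtain ⟨x, hx, rfl⟩ := hBS hb
      rcases mem_insert_iff.mp hx with rfl | hx'
      · exact ⟨1, one_pos, fun t _ => by simpa [vsub_eq_sub] using hx₀G⟩
      · obtain ⟨i, hxi⟩ := mem_iUnion.mp hx'
        obtain ⟨δ, hδ, hline⟩ := exists_delta_line (hri i) hxi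
        exact ⟨δ, hδ, fun t ht => by
          simpa [vsub_eq_sub] using hFG i (hline t ht)⟩
    choose δf hδfpos hδfmem using hdel
    rcases isEmpty_or_nonempty B with hBe | hBne
    · refine ⟨1, one_pos, fun z hz _ => ?_⟩
      have hB0 : B = (∅ : Set E) := Set.isEmpty_coe_sort.mp hBe
      have hvz : z - x₀ ∈ M.direction := by
        have := AffineSubspace.vsub_mem_direction hz hx₀M
        simpa [vsub_eq_sub] using this
      rw [hdir, ← hBspan, hB0, Submodule.span_empty, Submodule.mem_bot, sub_eq_zero] at hvz
      rw [hvz]; exact hx₀G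
    · set D' : Submodule ℝ E := Submodule.span ℝ (Set.range (Subtype.val : B → E)) with hD'
      have hD'eq : D' = Submodule.span ℝ S := by rw [hD', Subtype.range_coe]; exact hBspan
      set n : ℕ := Fintype.card B with hn
      have hnpos : 0 < n := Fintype.card_pos
      have hne : (n:ℝ) ≠ 0 := Nat.cast_ne_zero.mpr hnpos.ne'
      set φ : B → (D' →ₗ[ℝ] ℝ) := fun b => (Finsupp.lapply b).comp hBli.repr with hφ
      choose Kf hKfpos hbound' using fun b : B => (LinearMap.toContinuousLinearMap (φ b)).bound
      have hKnonneg : ∀ b, 0 ≤ Kf b := fun b => (hKfpos b).le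
      have hbound : ∀ (b : B) (v : D'), |φ b v| ≤ Kf b * ‖v‖ := by
        intro b v
        have := hbound' b v
        simpa using this
      set εf : B → ℝ := fun b => δf b / ((n:ℝ) * Kf b + 1) with hεf
      have hεfpos : ∀ b, 0 < εf b := fun b =>
        div_pos (hδfpos b) (by have := hKnonneg b; positivity)
      refine ⟨Finset.univ.inf' (Finset.univ_nonempty) εf,
        (Finset.lt_inf'_iff _).mpr fun b _ => hεfpos b, fun z hzM hznorm => ?_⟩
      set ε : ℝ := Finset.univ.inf' (Finset.univ_nonempty) εf with hεdef
      have hεle : ∀ b : B, ε ≤ εf b := fun b => Finset.inf'_le εf (Finset.mem_univ b)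
      have hv : z - x₀ ∈ D' := by
        rw [hD'eq, ← hdir]
        have := AffineSubspace.vsub_mem_direction hzM hx₀M
        simpa [vsub_eq_sub] using this
      set vv : D' := ⟨z - x₀, hv⟩ with hvv
      set c : B →₀ ℝ := hBli.repr vv with hc
      have hsum : ∑ b : B, c b • (b : E) = z - x₀ := by
        have h := hBli.linearCombination_repr vv
        rw [Finsupp.linearCombination_apply, Finsupp.sum_fintype] at h
        · exact h
        · intro b; exact zero_smul _ _
      have hnormvv : ‖vv‖ = ‖z - x₀‖ := rfl
      have hcb : ∀ b : B, |c b| ≤ Kf b * ‖z - x₀‖ := by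
        intro b
        have h1 : c b = φ b vv := rfl
        rw [h1, ← hnormvv]
        exact hbound b vv
      have hpmem : ∀ b : B, x₀ + ((n : ℝ) * c b) • (b : E) ∈ G := by
        intro b
        apply hδfmem b
        have h2 : |(n:ℝ) * c b| ≤ (n:ℝ) * Kf b * ‖z - x₀‖ := by
          rw [abs_mul, abs_of_nonneg (by positivity : (0:ℝ) ≤ (n:ℝ)), mul_assoc]
          exact mul_le_mul_of_nonneg_left (hcb b) (by positivity)
        have h3 : (n:ℝ) * Kf b * ‖z - x₀‖ ≤ (n:ℝ) * Kf b * ε :=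
          mul_le_mul_of_nonneg_left hznorm.le (by have := hKnonneg b; positivity)
        have h4 : (n:ℝ) * Kf b * ε ≤ (n:ℝ) * Kf b * εf b :=
          mul_le_mul_of_nonneg_left (hεle b) (by have := hKnonneg b; positivity)
        have h5 : (n:ℝ) * Kf b * εf b < δf b := by
          have ha : (0:ℝ) ≤ (n:ℝ) * Kf b := by have := hKnonneg b; positivity
          have hd := hδfpos b
          have hεfb : εf b = δf b / ((n:ℝ) * Kf b + 1) := rfl
          rw [hεfb, ← mul_div_assoc, div_lt_iff₀ (by positivity)]
          nlinarith
        calc |(n:ℝ) * c b| ≤ (n:ℝ) * Kf b * ‖z - x₀‖ := h2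
          _ ≤ (n:ℝ) * Kf b * ε := h3
          _ ≤ (n:ℝ) * Kf b * εf b := h4
          _ < δf b := h5
      have hterm : ∀ b : B, ((n:ℝ))⁻¹ • (x₀ + ((n:ℝ) * c b) • (b:E))
          = ((n:ℝ))⁻¹ • x₀ + c b • (b:E) := by
        intro b
        rw [smul_add, smul_smul]
        congr 2
        field_simp
      have hzeq : ∑ b : B, ((n:ℝ))⁻¹ • (x₀ + ((n:ℝ) * c b) • (b:E)) = z := by
        rw [Finset.sum_congr rfl (fun b _ => hterm b), Finset.sum_add_distrib, hsum,
          Finset.sum_const, Finset.card_univ, ← hn]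
        have hns : n • ((n:ℝ)⁻¹ • x₀) = (n:ℝ) • ((n:ℝ)⁻¹ • x₀) :=
          (Nat.cast_smul_eq_nsmul ℝ n _).symm
        rw [hns, smul_smul, mul_inv_cancel₀ hne, one_smul]
        abel
      rw [← hzeq]
      exact hGconv.sum_mem (fun b _ => by positivity)
        (by rw [Finset.sum_const, Finset.card_univ, ← hn, nsmul_eq_mul, mul_inv_cancel₀ hne])
        (fun b _ => hpmem b)
  obtain ⟨ε, hε, hkey⟩ := key
  refine ⟨G, ⟨V, ⟨(x₀, A x₀), (hVmem _).mpr ⟨hx₀M, hℓx₀⟩, rfl⟩, ?_, hGeq⟩, hFG, ?_⟩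
  · intro p hp
    obtain ⟨h1, h2⟩ := (hVmem p).mp hp
    rw [← h2]
    exact not_lt.mpr (hℓle p.1)
  · rw [mem_intrinsicInterior_iff_ball]
    refine ⟨subset_affineSpan ℝ G hx₀G, ε, hε, fun y hy hdist => ?_⟩
    have hyM : y ∈ M := by
      have hle : affineSpan ℝ G ≤ M := affineSpan_le.mpr fun z hz => hz.1
      exact hle hy
    exact hkey y hyM (by rwa [dist_eq_norm] at hdist)
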